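/- If D is a symmetric positive definite n×n real matrix, a is a nonzero vector in ℝⁿ, and A ≥ 0, then the elasto-plastic matrix D_ep = D - (D a aᵀ D)/(A + aᵀ D a) is symmetric and positive semidefinite. -/

import Mathlib

open Matrix

lemma cs_dot {n : ℕ} (u v : Fin n → ℝ) :
    (u ⬝ᵥ v) ^ 2 ≤ (u ⬝ᵥ u) * (v ⬝ᵥ v) := by
  simpa [dotProduct, sq] using Finset.sum_mul_sq_le_sq_mul_sq Finset.univ u v

lemma dot_self_nonneg' {n : ℕ} (u : Fin n → ℝ) : 0 ≤ u ⬝ᵥ u :=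
  Finset.sum_nonneg fun i _ => mul_self_nonneg _

theorem elastoplastic_matrix_symm_posSemidef
    {n : ℕ} (D : Matrix (Fin n) (Fin n) ℝ) (hD : D.PosDef)
    (a : Fin n → ℝ) (ha : a ≠ 0) (A : ℝ) (hA : 0 ≤ A) :
    let Dep := D - (A + a ⬝ᵥ D *ᵥ a)⁻¹ • (D * vecMulVec a a * D)
    Dep.IsSymm ∧ Dep.PosSemidef := by
  intro Dep
  have hDsymm : Dᵀ = D := hD.1
  have hα : 0 < a ⬝ᵥ D *ᵥ a := by simpa using hD.dotProduct_mulVec_pos ha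
  have hc : 0 < A + a ⬝ᵥ D *ᵥ a := by linarith
  have hsymm : Dep.IsSymm := by
    show Depᵀ = Dep
    unfold Dep
    rw [transpose_sub, transpose_smul, transpose_mul, transpose_mul,
      vecMulVec_eq (ι := Unit), transpose_mul, transpose_replicateCol, transpose_replicateRow, hDsymm]
    simp [Matrix.mul_assoc]
  set S := (open scoped MatrixOrder in CFC.sqrt D) with hS
  have hSsymm : Sᵀ = S := by
    rw [← conjTranspose_eq_transpose_of_trivial]
    exact (open scoped MatrixOrder in (CFC.sqrt_nonneg D).posSemidef.1)
  have hSS : S * S = D := (open scoped MatrixOrder in CFC.sqrt_mul_sqrt_self D hD.posSemidef.nonneg)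
  have key : ∀ y z : Fin n → ℝ, y ⬝ᵥ D *ᵥ z = (S *ᵥ y) ⬝ᵥ (S *ᵥ z) := by
    intro y z
    rw [← hSS, ← Matrix.mulVec_mulVec, dotProduct_mulVec y S, ← mulVec_transpose, hSsymm]
  refine ⟨hsymm, PosSemidef.of_dotProduct_mulVec_nonneg ?_ ?_⟩
  · show Depᴴ = Dep
    rw [conjTranspose_eq_transpose_of_trivial]; exact hsymm
  · intro x
    have hmv : vecMulVec a a *ᵥ (D *ᵥ x) = (a ⬝ᵥ (D *ᵥ x)) • a := by
      ext i
      simp only [vecMulVec, mulVec, dotProduct, Finset.mul_sum, Pi.smul_apply, smul_eq_mul,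
        Finset.sum_mul, of_apply]
      exact Finset.sum_congr rfl fun j _ => Finset.sum_congr rfl fun k _ => by ring
    have hquad : star x ⬝ᵥ Dep *ᵥ x
        = x ⬝ᵥ D *ᵥ x - (A + a ⬝ᵥ D *ᵥ a)⁻¹ * ((a ⬝ᵥ D *ᵥ x) * (a ⬝ᵥ D *ᵥ x)) := by
      have h1 : (D * vecMulVec a a * D) *ᵥ x = (a ⬝ᵥ D *ᵥ x) • (D *ᵥ a) := by
        rw [← Matrix.mulVec_mulVec, ← Matrix.mulVec_mulVec, hmv, mulVec_smul]
      have h2 : x ⬝ᵥ D *ᵥ a = a ⬝ᵥ D *ᵥ x := by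
        rw [key, key, dotProduct_comm]
      show x ⬝ᵥ Dep *ᵥ x = _
      unfold Dep
      rw [sub_mulVec, smul_mulVec, h1, dotProduct_sub]
      simp only [dotProduct_smul, smul_eq_mul, h2]
    rw [hquad]
    have hq : 0 ≤ x ⬝ᵥ D *ᵥ x := by rw [key]; exact dot_self_nonneg' _
    have hcs : (a ⬝ᵥ D *ᵥ x) * (a ⬝ᵥ D *ᵥ x) ≤ (a ⬝ᵥ D *ᵥ a) * (x ⬝ᵥ D *ᵥ x) := by
      rw [key a x, key a a, key x x, ← sq]
      exact cs_dot _ _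
    have h3 : (a ⬝ᵥ D *ᵥ x) * (a ⬝ᵥ D *ᵥ x) ≤ (A + a ⬝ᵥ D *ᵥ a) * (x ⬝ᵥ D *ᵥ x) := by
      nlinarith
    rw [sub_nonneg, inv_mul_le_iff₀ hc]
    linarith
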